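/- Let H ∈ (1/2, 1) and β ∈ (1−H, H). Then sup_{v>0} √(Θ(v)) / v^{1−β} < ∞ and ∫_0^∞ √(Θ(y)) / y^{2−β} dy < ∞. -/

import Mathlib

open MeasureTheory Filter Set

/-- The function `Θ(x)` from the paper, for Hurst parameter `H`. -/
noncomputable def Theta (H : ℝ) (x : ℝ) : ℝ :=
  ∫ u in (0:ℝ)..1, ∫ s in (0:ℝ)..1,
    (x ^ (2*H) + 2 * u ^ (2*H) + |s - u + x| ^ (2*H)
      - (u + x) ^ (2*H) - |u - x| ^ (2*H) - |u - s| ^ (2*H))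

open intervalIntegral

lemma rpow_succ' {b m : ℝ} (hb : 0 ≤ b) (hm : m + 1 ≠ 0) : b ^ (m+1) = b ^ m * b := by
  rcases hb.eq_or_lt with h | h
  · rw [← h, Real.zero_rpow hm, mul_zero]
  · rw [Real.rpow_add_one h.ne']

lemma hda_addc {m : ℝ} (hm : 0 ≤ m) (c t : ℝ) :
    HasDerivAt (fun t : ℝ => (t + c) ^ (m+1) / (m+1)) ((t + c) ^ m) t := by
  have h1 : HasDerivAt (fun t : ℝ => t + c) 1 t := (hasDerivAt_id t).add_const c
  have h2 := ((Real.hasDerivAt_rpow_const (x := t + c) (p := m+1) (Or.inr (by linarith))).comp t h1).div_const (m+1)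
  have hm0 : m + 1 ≠ 0 := by linarith
  convert h2 using 1
  · rfl
  · rfl
  · rfl
  rw [show m + 1 - 1 = m by ring]
  all_goals try field_simp
  all_goals try ring

lemma hda_cadd {m : ℝ} (hm : 0 ≤ m) (c t : ℝ) :
    HasDerivAt (fun t : ℝ => (c + t) ^ (m+1) / (m+1)) ((c + t) ^ m) t := by
  have h1 : HasDerivAt (fun t : ℝ => c + t) 1 t := (hasDerivAt_id t).const_add c
  have h2 := ((Real.hasDerivAt_rpow_const (x := c + t) (p := m+1) (Or.inr (by linarith))).comp t h1).div_const (m+1)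
  have hm0 : m + 1 ≠ 0 := by linarith
  convert h2 using 1
  · rfl
  · rfl
  · rfl
  rw [show m + 1 - 1 = m by ring]
  all_goals try field_simp
  all_goals try ring

lemma hda_subc {m : ℝ} (hm : 0 ≤ m) (c t : ℝ) :
    HasDerivAt (fun t : ℝ => (t - c) ^ (m+1) / (m+1)) ((t - c) ^ m) t := by
  have h1 : HasDerivAt (fun t : ℝ => t - c) 1 t := (hasDerivAt_id t).sub_const c
  have h2 := ((Real.hasDerivAt_rpow_const (x := t - c) (p := m+1) (Or.inr (by linarith))).comp t h1).div_const (m+1)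
  have hm0 : m + 1 ≠ 0 := by linarith
  convert h2 using 1
  · rfl
  · rfl
  · rfl
  rw [show m + 1 - 1 = m by ring]
  all_goals try field_simp
  all_goals try ring

lemma hda_csub_neg {m : ℝ} (hm : 0 ≤ m) (c t : ℝ) :
    HasDerivAt (fun t : ℝ => -((c - t) ^ (m+1) / (m+1))) ((c - t) ^ m) t := by
  have h1 : HasDerivAt (fun t : ℝ => c - t) (-1) t := (hasDerivAt_id t).const_sub c
  have h2 := (((Real.hasDerivAt_rpow_const (x := c - t) (p := m+1) (Or.inr (by linarith))).comp t h1).div_const (m+1)).neg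
  have hm0 : m + 1 ≠ 0 := by linarith
  convert h2 using 1
  · rfl
  · rfl
  · rfl
  rw [show m + 1 - 1 = m by ring]
  all_goals try field_simp

lemma hda_csub {m : ℝ} (hm : 0 ≤ m) (c t : ℝ) :
    HasDerivAt (fun t : ℝ => (c - t) ^ (m+1) / (m+1)) (-((c - t) ^ m)) t := by
  have h := (hda_csub_neg hm c t).neg
  simpa [Pi.neg_def] using h

lemma hda_id' {m : ℝ} (hm : 0 ≤ m) (t : ℝ) :
    HasDerivAt (fun t : ℝ => t ^ (m+1) / (m+1)) (t ^ m) t := by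
  have h2 := (Real.hasDerivAt_rpow_const (x := t) (p := m+1) (Or.inr (by linarith))).div_const (m+1)
  have hm0 : m + 1 ≠ 0 := by linarith
  convert h2 using 1
  · rfl
  · rfl
  rw [show m + 1 - 1 = m by ring]
  all_goals try field_simp
  all_goals try ring


lemma cont_abs_rpow {p : ℝ} (hp : 0 ≤ p) (c : ℝ) :
    Continuous (fun s : ℝ => |s - c| ^ p) :=
  ((continuous_id.sub continuous_const).abs).rpow_const (fun _ => Or.inr hp)

lemma integral_abs_rpow {p : ℝ} (hp : 1 ≤ p) {c : ℝ} (hc : c ≤ 1) :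
    ∫ s in (0:ℝ)..1, |s - c| ^ p = ((1 - c) ^ (p+1) + c * |c| ^ p) / (p+1) := by
  have hp0 : (0:ℝ) ≤ p := by linarith
  have hq0 : p + 1 ≠ 0 := by linarith
  rcases le_or_gt c 0 with hc0 | hc0
  · -- c ≤ 0 : |s - c| = s - c on [0,1]
    have h1 : ∫ s in (0:ℝ)..1, |s - c| ^ p = ∫ s in (0:ℝ)..1, (s - c) ^ p := by
      apply integral_congr
      intro s hs
      rw [uIcc_of_le (by norm_num : (0:ℝ) ≤ 1)] at hs
      simp only
      rw [abs_of_nonneg (by linarith [hs.1] : 0 ≤ s - c)]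
    rw [h1, integral_eq_sub_of_hasDerivAt (f := fun s => (s - c)^(p+1)/(p+1))
      (fun s _ => hda_subc hp0 c s)
      (((continuous_id.sub continuous_const).rpow_const (fun s => Or.inr hp0)).intervalIntegrable 0 1)]
    have h2 : (0 - c : ℝ) ^ (p+1) = -(c * |c| ^ p) := by
      rw [abs_of_nonpos hc0, zero_sub, rpow_succ' (by linarith : (0:ℝ) ≤ -c) hq0]
      ring
    rw [h2]
    ring
  · -- 0 < c ≤ 1 : split at c
    have hcont := cont_abs_rpow hp0 c
    have hsplit := integral_add_adjacent_intervals (μ := volume) (a := (0:ℝ)) (b := c) (c := 1)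
      (hcont.intervalIntegrable 0 c) (hcont.intervalIntegrable c 1)
    rw [← hsplit]
    have h1 : ∫ s in (0:ℝ)..c, |s - c| ^ p = ∫ s in (0:ℝ)..c, (c - s) ^ p := by
      apply integral_congr
      intro s hs
      rw [uIcc_of_le hc0.le] at hs
      simp only
      rw [abs_of_nonpos (by linarith [hs.2] : s - c ≤ 0), neg_sub]
    have h2 : ∫ s in c..(1:ℝ), |s - c| ^ p = ∫ s in c..(1:ℝ), (s - c) ^ p := by
      apply integral_congr
      intro s hs
      rw [uIcc_of_le hc] at hs
      simp only
      rw [abs_of_nonneg (by linarith [hs.1] : 0 ≤ s - c)]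
    rw [h1, h2,
      integral_eq_sub_of_hasDerivAt (f := fun s => -((c - s)^(p+1)/(p+1)))
        (fun s _ => hda_csub_neg hp0 c s)
        (((continuous_const.sub continuous_id).rpow_const (fun s => Or.inr hp0)).intervalIntegrable 0 c),
      integral_eq_sub_of_hasDerivAt (f := fun s => (s - c)^(p+1)/(p+1))
        (fun s _ => hda_subc hp0 c s)
        (((continuous_id.sub continuous_const).rpow_const (fun s => Or.inr hp0)).intervalIntegrable c 1)]
    simp only [sub_self, sub_zero, Real.zero_rpow hq0]
    rw [abs_of_nonneg hc0.le, rpow_succ' hc0.le hq0]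
    ring


lemma inner_eq {p : ℝ} (hp : 1 ≤ p) {x u : ℝ} (hx : 0 < x) (hu0 : 0 ≤ u) (hu1 : u ≤ 1) :
    (∫ s in (0:ℝ)..1, (x ^ p + 2 * u ^ p + |s - u + x| ^ p
        - (u + x) ^ p - |u - x| ^ p - |u - s| ^ p))
      = x ^ p + 2 * u ^ p - (u + x) ^ p - |u - x| ^ p
        + ((1 + x - u) ^ (p+1) + (u - x) * |u - x| ^ p) / (p+1)
        - (u ^ (p+1) + (1 - u) ^ (p+1)) / (p+1) := by
  have hp0 : (0:ℝ) ≤ p := by linarith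
  have hq0 : p + 1 ≠ 0 := by linarith
  set C : ℝ := x ^ p + 2 * u ^ p - (u + x) ^ p - |u - x| ^ p with hC
  have h1 : (∫ s in (0:ℝ)..1, (x ^ p + 2 * u ^ p + |s - u + x| ^ p
        - (u + x) ^ p - |u - x| ^ p - |u - s| ^ p))
      = ∫ s in (0:ℝ)..1, ((C + |s - (u - x)| ^ p) - |s - u| ^ p) := by
    apply integral_congr
    intro s _
    simp only
    rw [show s - (u - x) = s - u + x by ring, abs_sub_comm s u, hC]
    ring
  rw [h1, intervalIntegral.integral_sub (f := fun s => C + |s - (u - x)| ^ p) (g := fun s => |s - u| ^ p)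
      ((continuous_const.add (cont_abs_rpow hp0 (u - x))).intervalIntegrable 0 1)
      ((cont_abs_rpow hp0 u).intervalIntegrable 0 1),
    intervalIntegral.integral_add (f := fun _ => C) (g := fun s => |s - (u - x)| ^ p)
      ((continuous_const (y := C)).intervalIntegrable 0 1)
      ((cont_abs_rpow hp0 (u - x)).intervalIntegrable 0 1),
    intervalIntegral.integral_const,
    integral_abs_rpow hp (by linarith : u - x ≤ 1),
    integral_abs_rpow hp (by linarith : u ≤ 1)]
  rw [abs_of_nonneg hu0, rpow_succ' hu0 hq0, hC]
  simp only [smul_eq_mul]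
  rw [show (1:ℝ) - (u - x) = 1 + x - u by ring]
  ring


section
variable {p x : ℝ}

lemma contG (hp0 : 0 ≤ p) (hq0 : (0:ℝ) ≤ p + 1) (x : ℝ) :
    Continuous (fun u : ℝ => x ^ p + 2 * u ^ p - (u + x) ^ p - |u - x| ^ p
        + ((1 + x - u) ^ (p+1) + (u - x) * |u - x| ^ p) / (p+1)
        - (u ^ (p+1) + (1 - u) ^ (p+1)) / (p+1)) := by
  have c1 : Continuous fun u : ℝ => u ^ p := continuous_id.rpow_const (fun _ => Or.inr hp0)
  have c2 : Continuous fun u : ℝ => (u + x) ^ p :=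
    (continuous_id.add continuous_const).rpow_const (fun _ => Or.inr hp0)
  have c3 : Continuous fun u : ℝ => |u - x| ^ p := cont_abs_rpow hp0 x
  have c4 : Continuous fun u : ℝ => (1 + x - u) ^ (p+1) :=
    (continuous_const.sub continuous_id).rpow_const (fun _ => Or.inr hq0)
  have c5 : Continuous fun u : ℝ => (u - x) * |u - x| ^ p :=
    (continuous_id.sub continuous_const).mul c3
  have c6 : Continuous fun u : ℝ => u ^ (p+1) := continuous_id.rpow_const (fun _ => Or.inr hq0)
  have c7 : Continuous fun u : ℝ => (1 - u) ^ (p+1) :=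
    (continuous_const.sub continuous_id).rpow_const (fun _ => Or.inr hq0)
  exact ((((continuous_const.add (continuous_const.mul c1)).sub c2).sub c3).add
    (((c4.add c5)).div_const (p+1))).sub ((c6.add c7).div_const (p+1))

lemma contG1 (hp0 : 0 ≤ p) (hq0 : (0:ℝ) ≤ p + 1) (x : ℝ) :
    Continuous (fun u : ℝ => x ^ p + 2 * u ^ p - (u + x) ^ p - (x - u) ^ p
        + ((1 + x - u) ^ (p+1) - (x - u) ^ (p+1)) / (p+1)
        - (u ^ (p+1) + (1 - u) ^ (p+1)) / (p+1)) := by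
  have c1 : Continuous fun u : ℝ => u ^ p := continuous_id.rpow_const (fun _ => Or.inr hp0)
  have c2 : Continuous fun u : ℝ => (u + x) ^ p :=
    (continuous_id.add continuous_const).rpow_const (fun _ => Or.inr hp0)
  have c3 : Continuous fun u : ℝ => (x - u) ^ p :=
    (continuous_const.sub continuous_id).rpow_const (fun _ => Or.inr hp0)
  have c4 : Continuous fun u : ℝ => (1 + x - u) ^ (p+1) :=
    (continuous_const.sub continuous_id).rpow_const (fun _ => Or.inr hq0)
  have c5 : Continuous fun u : ℝ => (x - u) ^ (p+1) :=
    (continuous_const.sub continuous_id).rpow_const (fun _ => Or.inr hq0)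
  have c6 : Continuous fun u : ℝ => u ^ (p+1) := continuous_id.rpow_const (fun _ => Or.inr hq0)
  have c7 : Continuous fun u : ℝ => (1 - u) ^ (p+1) :=
    (continuous_const.sub continuous_id).rpow_const (fun _ => Or.inr hq0)
  exact ((((continuous_const.add (continuous_const.mul c1)).sub c2).sub c3).add
    ((c4.sub c5).div_const (p+1))).sub ((c6.add c7).div_const (p+1))

lemma contG2 (hp0 : 0 ≤ p) (hq0 : (0:ℝ) ≤ p + 1) (x : ℝ) :
    Continuous (fun u : ℝ => x ^ p + 2 * u ^ p - (u + x) ^ p - (u - x) ^ p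
        + ((1 + x - u) ^ (p+1) + (u - x) ^ (p+1)) / (p+1)
        - (u ^ (p+1) + (1 - u) ^ (p+1)) / (p+1)) := by
  have c1 : Continuous fun u : ℝ => u ^ p := continuous_id.rpow_const (fun _ => Or.inr hp0)
  have c2 : Continuous fun u : ℝ => (u + x) ^ p :=
    (continuous_id.add continuous_const).rpow_const (fun _ => Or.inr hp0)
  have c3 : Continuous fun u : ℝ => (u - x) ^ p :=
    (continuous_id.sub continuous_const).rpow_const (fun _ => Or.inr hp0)
  have c4 : Continuous fun u : ℝ => (1 + x - u) ^ (p+1) :=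
    (continuous_const.sub continuous_id).rpow_const (fun _ => Or.inr hq0)
  have c5 : Continuous fun u : ℝ => (u - x) ^ (p+1) :=
    (continuous_id.sub continuous_const).rpow_const (fun _ => Or.inr hq0)
  have c6 : Continuous fun u : ℝ => u ^ (p+1) := continuous_id.rpow_const (fun _ => Or.inr hq0)
  have c7 : Continuous fun u : ℝ => (1 - u) ^ (p+1) :=
    (continuous_const.sub continuous_id).rpow_const (fun _ => Or.inr hq0)
  exact ((((continuous_const.add (continuous_const.mul c1)).sub c2).sub c3).add
    ((c4.add c5).div_const (p+1))).sub ((c6.add c7).div_const (p+1))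

lemma hPsi1 (hp0 : 0 ≤ p) (x u : ℝ) :
    HasDerivAt (fun u : ℝ => x^p * u + 2*(u^(p+1)/(p+1)) - (u+x)^(p+1)/(p+1)
        - (-((x-u)^(p+1)/(p+1)))
        + ((-((1+x-u)^(p+1+1)/(p+1+1))) - (-((x-u)^(p+1+1)/(p+1+1))))/(p+1)
        - (u^(p+1+1)/(p+1+1) + (-((1-u)^(p+1+1)/(p+1+1))))/(p+1))
      (x ^ p + 2 * u ^ p - (u + x) ^ p - (x - u) ^ p
        + ((1 + x - u) ^ (p+1) - (x - u) ^ (p+1)) / (p+1)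
        - (u ^ (p+1) + (1 - u) ^ (p+1)) / (p+1)) u := by
  have hq0 : (0:ℝ) ≤ p + 1 := by linarith
  have A1 : HasDerivAt (fun u:ℝ => x^p * u) (x^p) u := by
    simpa using (hasDerivAt_id u).const_mul (x^p)
  have A2 := (hda_id' hp0 u).const_mul 2
  have A3 := hda_addc hp0 x u
  have A4 := hda_csub_neg hp0 x u
  have A5 := ((hda_csub_neg hq0 (1+x) u).sub (hda_csub_neg hq0 x u)).div_const (p+1)
  have A6 := ((hda_id' hq0 u).add (hda_csub_neg hq0 1 u)).div_const (p+1)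
  exact ((((A1.add A2).sub A3).sub A4).add A5).sub A6

lemma hPsi2 (hp0 : 0 ≤ p) (x u : ℝ) :
    HasDerivAt (fun u : ℝ => x^p * u + 2*(u^(p+1)/(p+1)) - (u+x)^(p+1)/(p+1)
        - (u-x)^(p+1)/(p+1)
        + ((-((1+x-u)^(p+1+1)/(p+1+1))) + (u-x)^(p+1+1)/(p+1+1))/(p+1)
        - (u^(p+1+1)/(p+1+1) + (-((1-u)^(p+1+1)/(p+1+1))))/(p+1))
      (x ^ p + 2 * u ^ p - (u + x) ^ p - (u - x) ^ p
        + ((1 + x - u) ^ (p+1) + (u - x) ^ (p+1)) / (p+1)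
        - (u ^ (p+1) + (1 - u) ^ (p+1)) / (p+1)) u := by
  have hq0 : (0:ℝ) ≤ p + 1 := by linarith
  have A1 : HasDerivAt (fun u:ℝ => x^p * u) (x^p) u := by
    simpa using (hasDerivAt_id u).const_mul (x^p)
  have A2 := (hda_id' hp0 u).const_mul 2
  have A3 := hda_addc hp0 x u
  have A4 := hda_subc hp0 x u
  have A5 := ((hda_csub_neg hq0 (1+x) u).add (hda_subc hq0 x u)).div_const (p+1)
  have A6 := ((hda_id' hq0 u).add (hda_csub_neg hq0 1 u)).div_const (p+1)
  exact ((((A1.add A2).sub A3).sub A4).add A5).sub A6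

end

lemma theta_small {H : ℝ} (hH1 : 1/2 < H) (hH2 : H < 1) {x : ℝ} (hx0 : 0 < x) (hx1 : x ≤ 1) :
    Theta H x = x^(2*H) + 2/(2*H+1) - ((1+x)^(2*H+1) + (1-x)^(2*H+1))/(2*H+1)
      + ((1+x)^(2*H+1+1) + (1-x)^(2*H+1+1) - 2*x^(2*H+1+1) - 2)/((2*H+1)*(2*H+1+1)) := by
  unfold Theta
  set p := 2*H with hpdef
  have hp : 1 ≤ p := by rw [hpdef]; linarith
  have hp0 : (0:ℝ) ≤ p := by linarith
  have hq0 : (0:ℝ) ≤ p + 1 := by linarith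
  have hq0' : p + 1 ≠ 0 := by linarith
  have hr0' : p + 1 + 1 ≠ 0 := by linarith
  have h1 : (∫ u in (0:ℝ)..1, ∫ s in (0:ℝ)..1,
      (x ^ p + 2 * u ^ p + |s - u + x| ^ p - (u + x) ^ p - |u - x| ^ p - |u - s| ^ p))
      = ∫ u in (0:ℝ)..1, (x ^ p + 2 * u ^ p - (u + x) ^ p - |u - x| ^ p
        + ((1 + x - u) ^ (p+1) + (u - x) * |u - x| ^ p) / (p+1)
        - (u ^ (p+1) + (1 - u) ^ (p+1)) / (p+1)) := by
    apply integral_congr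
    intro u hu
    rw [uIcc_of_le (by norm_num : (0:ℝ) ≤ 1)] at hu
    exact inner_eq hp hx0 hu.1 hu.2
  rw [h1]
  rw [← integral_add_adjacent_intervals (μ := volume) (b := x)
    ((contG hp0 hq0 x).intervalIntegrable 0 x) ((contG hp0 hq0 x).intervalIntegrable x 1)]
  have h2 : (∫ u in (0:ℝ)..x, (x ^ p + 2 * u ^ p - (u + x) ^ p - |u - x| ^ p
        + ((1 + x - u) ^ (p+1) + (u - x) * |u - x| ^ p) / (p+1)
        - (u ^ (p+1) + (1 - u) ^ (p+1)) / (p+1)))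
      = ∫ u in (0:ℝ)..x, (x ^ p + 2 * u ^ p - (u + x) ^ p - (x - u) ^ p
        + ((1 + x - u) ^ (p+1) - (x - u) ^ (p+1)) / (p+1)
        - (u ^ (p+1) + (1 - u) ^ (p+1)) / (p+1)) := by
    apply integral_congr
    intro u hu
    rw [uIcc_of_le hx0.le] at hu
    simp only
    rw [abs_of_nonpos (by linarith [hu.2] : u - x ≤ 0), neg_sub,
      (by rw [rpow_succ' (by linarith [hu.2] : (0:ℝ) ≤ x - u) hq0'] ; ring :
        (u - x) * (x - u) ^ p = -((x - u) ^ (p+1)))]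
    ring
  have h3 : (∫ u in x..(1:ℝ), (x ^ p + 2 * u ^ p - (u + x) ^ p - |u - x| ^ p
        + ((1 + x - u) ^ (p+1) + (u - x) * |u - x| ^ p) / (p+1)
        - (u ^ (p+1) + (1 - u) ^ (p+1)) / (p+1)))
      = ∫ u in x..(1:ℝ), (x ^ p + 2 * u ^ p - (u + x) ^ p - (u - x) ^ p
        + ((1 + x - u) ^ (p+1) + (u - x) ^ (p+1)) / (p+1)
        - (u ^ (p+1) + (1 - u) ^ (p+1)) / (p+1)) := by
    apply integral_congr
    intro u hu
    rw [uIcc_of_le hx1] at hu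
    simp only
    rw [abs_of_nonneg (by linarith [hu.1] : (0:ℝ) ≤ u - x),
      (by rw [rpow_succ' (by linarith [hu.1] : (0:ℝ) ≤ u - x) hq0'] ; ring :
        (u - x) * (u - x) ^ p = (u - x) ^ (p+1))]
  rw [h2, h3,
    integral_eq_sub_of_hasDerivAt (fun u _ => hPsi1 hp0 x u)
      ((contG1 hp0 hq0 x).intervalIntegrable 0 x),
    integral_eq_sub_of_hasDerivAt (fun u _ => hPsi2 hp0 x u)
      ((contG2 hp0 hq0 x).intervalIntegrable x 1)]
  simp only [sub_self, sub_zero, add_zero, zero_add, add_sub_cancel_right, add_sub_cancel_left,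
    mul_zero, mul_one, zero_div, Real.zero_rpow hq0', Real.zero_rpow hr0', Real.one_rpow,
    neg_zero, zero_sub, neg_neg]
  field_simp
  ring


lemma theta_large {H : ℝ} (hH1 : 1/2 < H) (hH2 : H < 1) {x : ℝ} (hx : 1 ≤ x) :
    Theta H x = x^(2*H) + 2/(2*H+1) - ((1+x)^(2*H+1) - (x-1)^(2*H+1))/(2*H+1)
      + ((1+x)^(2*H+1+1) + (x-1)^(2*H+1+1) - 2*x^(2*H+1+1) - 2)/((2*H+1)*(2*H+1+1)) := by
  have hx0 : (0:ℝ) < x := by linarith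
  unfold Theta
  set p := 2*H with hpdef
  have hp : 1 ≤ p := by rw [hpdef]; linarith
  have hp0 : (0:ℝ) ≤ p := by linarith
  have hq0 : (0:ℝ) ≤ p + 1 := by linarith
  have hq0' : p + 1 ≠ 0 := by linarith
  have hr0' : p + 1 + 1 ≠ 0 := by linarith
  have h1 : (∫ u in (0:ℝ)..1, ∫ s in (0:ℝ)..1,
      (x ^ p + 2 * u ^ p + |s - u + x| ^ p - (u + x) ^ p - |u - x| ^ p - |u - s| ^ p))
      = ∫ u in (0:ℝ)..1, (x ^ p + 2 * u ^ p - (u + x) ^ p - (x - u) ^ p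
        + ((1 + x - u) ^ (p+1) - (x - u) ^ (p+1)) / (p+1)
        - (u ^ (p+1) + (1 - u) ^ (p+1)) / (p+1)) := by
    apply integral_congr
    intro u hu
    rw [uIcc_of_le (by norm_num : (0:ℝ) ≤ 1)] at hu
    dsimp only
    rw [inner_eq hp hx0 hu.1 hu.2]
    rw [abs_of_nonpos (by linarith [hu.2] : u - x ≤ 0), neg_sub,
      (by rw [rpow_succ' (by linarith [hu.2] : (0:ℝ) ≤ x - u) hq0'] ; ring :
        (u - x) * (x - u) ^ p = -((x - u) ^ (p+1)))]
    ring
  rw [h1, integral_eq_sub_of_hasDerivAt (fun u _ => hPsi1 hp0 x u)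
      ((contG1 hp0 hq0 x).intervalIntegrable 0 1)]
  simp only [sub_self, sub_zero, add_zero, zero_add, add_sub_cancel_right, add_sub_cancel_left,
    mul_zero, mul_one, zero_div, Real.zero_rpow hq0', Real.zero_rpow hr0', Real.one_rpow,
    neg_zero, zero_sub, neg_neg]
  field_simp
  ring


lemma hda2_cadd {m : ℝ} (hm : 1 ≤ m) (c t : ℝ) :
    HasDerivAt (fun t : ℝ => (c + t) ^ m) (m * (c + t) ^ (m-1)) t := by
  have h1 : HasDerivAt (fun t : ℝ => c + t) 1 t := (hasDerivAt_id t).const_add c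
  have h2 := (Real.hasDerivAt_rpow_const (x := c + t) (p := m) (Or.inr hm)).comp t h1
  simp only [mul_one] at h2
  exact h2

lemma hda2_csub {m : ℝ} (hm : 1 ≤ m) (c t : ℝ) :
    HasDerivAt (fun t : ℝ => -((c - t) ^ m)) (m * (c - t) ^ (m-1)) t := by
  have h1 : HasDerivAt (fun t : ℝ => c - t) (-1) t := (hasDerivAt_id t).const_sub c
  have h2 := ((Real.hasDerivAt_rpow_const (x := c - t) (p := m) (Or.inr hm)).comp t h1).neg
  convert h2 using 1
  · rfl
  · rfl
  · rfl
  ring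

lemma two_rpow_le_four {m : ℝ} (hm : m ≤ 2) : (2:ℝ) ^ m ≤ 4 := by
  have h1 : (2:ℝ) ^ m ≤ (2:ℝ) ^ (2:ℝ) := Real.rpow_le_rpow_of_exponent_le one_le_two hm
  have h2 : (2:ℝ) ^ (2:ℝ) = 4 := by
    rw [show (2:ℝ) = ((2:ℕ):ℝ) by norm_num]
    rw [Real.rpow_natCast]
    norm_num
  linarith

lemma F1_le {p x : ℝ} (hp1 : 1 < p) (hp2 : p < 2) (hx0 : 0 < x) (hx1 : x ≤ 1) :
    x^p + 2/(p+1) - ((1+x)^(p+1) + (1-x)^(p+1))/(p+1)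
      + ((1+x)^(p+1+1) + (1-x)^(p+1+1) - 2*x^(p+1+1) - 2)/((p+1)*(p+1+1)) ≤ 7 * x^p := by
  have hp : 1 ≤ p := hp1.le
  have hp0 : (0:ℝ) ≤ p := by linarith
  have hq0 : (0:ℝ) ≤ p + 1 := by linarith
  have hq1 : (1:ℝ) ≤ p + 1 := by linarith
  have hq0' : p + 1 ≠ 0 := by linarith
  have hr0' : p + 1 + 1 ≠ 0 := by linarith
  set g : ℝ → ℝ := fun t => ((1+t)^(p+1) + (-((1-t)^(p+1))))/(p+1) - ((1+t)^p + (-((1-t)^p)))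
    with hgdef
  have contg : Continuous g := by
    have c1 : Continuous fun t:ℝ => (1+t)^(p+1) :=
      (continuous_const.add continuous_id).rpow_const (fun _ => Or.inr hq0)
    have c2 : Continuous fun t:ℝ => (1-t)^(p+1) :=
      (continuous_const.sub continuous_id).rpow_const (fun _ => Or.inr hq0)
    have c3 : Continuous fun t:ℝ => (1+t)^p :=
      (continuous_const.add continuous_id).rpow_const (fun _ => Or.inr hp0)
    have c4 : Continuous fun t:ℝ => (1-t)^p :=
      (continuous_const.sub continuous_id).rpow_const (fun _ => Or.inr hp0)
    exact ((c1.add c2.neg).div_const (p+1)).sub (c3.add c4.neg)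
  -- FTC : ∫ g on [0,x] equals GΦ x - GΦ 0
  have hGphi : ∀ t : ℝ, HasDerivAt (fun t : ℝ =>
      ((1+t)^(p+1+1)/(p+1+1) + (1-t)^(p+1+1)/(p+1+1))/(p+1)
        - ((1+t)^(p+1)/(p+1) + (1-t)^(p+1)/(p+1))) (g t) t := by
    intro t
    have A1 := ((hda_cadd hq0 1 t).add (hda_csub hq0 1 t)).div_const (p+1)
    have A2 := (hda_cadd hp0 1 t).add (hda_csub hp0 1 t)
    exact A1.sub A2
  have hftc := integral_eq_sub_of_hasDerivAt (a := 0) (b := x)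
    (fun t _ => hGphi t) (contg.intervalIntegrable 0 x)
  -- bound g t ≤ 12 t on [0,1]
  have hg0 : g 0 = 0 := by
    rw [hgdef]
    norm_num
  have hgbound : ∀ t ∈ Icc (0:ℝ) x, g t ≤ 12 * t := by
    have hderiv : ∀ t ∈ Icc (0:ℝ) 1, HasDerivWithinAt g
        (((p+1) * (1+t)^(p+1-1) + (p+1) * (1-t)^(p+1-1))/(p+1)
          - (p * (1+t)^(p-1) + p * (1-t)^(p-1))) (Icc (0:ℝ) 1) t := by
      intro t _
      exact ((((hda2_cadd hq1 1 t).add (hda2_csub hq1 1 t)).div_const (p+1)).sub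
        ((hda2_cadd hp 1 t).add (hda2_csub hp 1 t))).hasDerivWithinAt
    have hbnd : ∀ t ∈ Icc (0:ℝ) 1,
        ‖((p+1) * (1+t)^(p+1-1) + (p+1) * (1-t)^(p+1-1))/(p+1)
          - (p * (1+t)^(p-1) + p * (1-t)^(p-1))‖ ≤ 12 := by
      intro t ht
      obtain ⟨ht0, ht1⟩ := ht
      rw [show p + 1 - 1 = p by ring]
      have e1 : ((p+1) * (1+t)^p + (p+1) * (1-t)^p)/(p+1) = (1+t)^p + (1-t)^p := by
        field_simp
      rw [e1, Real.norm_eq_abs, abs_le]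
      have b1 : (1+t)^p ≤ 4 := by
        calc (1+t)^p ≤ (2:ℝ)^p :=
              Real.rpow_le_rpow (by linarith) (by linarith) hp0
          _ ≤ 4 := two_rpow_le_four hp2.le
      have b1' : (0:ℝ) ≤ (1+t)^p := Real.rpow_nonneg (by linarith) _
      have b2 : (1-t)^p ≤ 1 := Real.rpow_le_one (by linarith) (by linarith) hp0
      have b2' : (0:ℝ) ≤ (1-t)^p := Real.rpow_nonneg (by linarith) _
      have b3 : (1+t)^(p-1) ≤ 2 := by
        calc (1+t)^(p-1) ≤ (2:ℝ)^(p-1) :=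
              Real.rpow_le_rpow (by linarith) (by linarith) (by linarith)
          _ ≤ (2:ℝ)^(1:ℝ) := Real.rpow_le_rpow_of_exponent_le one_le_two (by linarith)
          _ = 2 := Real.rpow_one 2
      have b3' : (0:ℝ) ≤ (1+t)^(p-1) := Real.rpow_nonneg (by linarith) _
      have b4 : (1-t)^(p-1) ≤ 1 := Real.rpow_le_one (by linarith) (by linarith) (by linarith)
      have b4' : (0:ℝ) ≤ (1-t)^(p-1) := Real.rpow_nonneg (by linarith) _
      constructor
      · nlinarith
      · nlinarith
    intro t ht
    have ht' : t ∈ Icc (0:ℝ) 1 := ⟨ht.1, le_trans ht.2 hx1⟩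
    have h0' : (0:ℝ) ∈ Icc (0:ℝ) 1 := by constructor <;> norm_num
    have := Convex.norm_image_sub_le_of_norm_hasDerivWithin_le hderiv hbnd
      (convex_Icc 0 1) h0' ht'
    rw [hg0, sub_zero, sub_zero, Real.norm_eq_abs, Real.norm_eq_abs,
      abs_of_nonneg ht.1] at this
    calc g t ≤ |g t| := le_abs_self _
      _ ≤ 12 * t := this
  -- integrate the bound
  have hint : (∫ t in (0:ℝ)..x, g t) ≤ ∫ t in (0:ℝ)..x, 12 * t := by
    apply integral_mono_on hx0.le (contg.intervalIntegrable 0 x)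
      ((continuous_const.mul continuous_id).intervalIntegrable 0 x) hgbound
  have hval : (∫ t in (0:ℝ)..x, 12 * t) = 6 * x^2 := by
    rw [intervalIntegral.integral_const_mul, integral_id]
    norm_num
    ring
  have hx2p : x^(2:ℕ) ≤ x^p := by
    have h1 : x^(2:ℝ) ≤ x^p := Real.rpow_le_rpow_of_exponent_ge hx0 hx1 hp2.le
    rwa [show (2:ℝ) = ((2:ℕ):ℝ) by norm_num, Real.rpow_natCast] at h1
  -- identity: LHS = x^p - 2*x^(p+1+1)/((p+1)*(p+1+1)) + (GΦ x - GΦ 0)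
  have hkey : x^p + 2/(p+1) - ((1+x)^(p+1) + (1-x)^(p+1))/(p+1)
      + ((1+x)^(p+1+1) + (1-x)^(p+1+1) - 2*x^(p+1+1) - 2)/((p+1)*(p+1+1))
      = x^p - 2*x^(p+1+1)/((p+1)*(p+1+1))
        + ((((1+x)^(p+1+1)/(p+1+1) + (1-x)^(p+1+1)/(p+1+1))/(p+1)
            - ((1+x)^(p+1)/(p+1) + (1-x)^(p+1)/(p+1)))
          - (((1+0)^(p+1+1)/(p+1+1) + (1-0)^(p+1+1)/(p+1+1))/(p+1)
            - ((1+0)^(p+1)/(p+1) + (1-0)^(p+1)/(p+1)))) := by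
    norm_num [Real.one_rpow]
    field_simp
    ring
  rw [hkey, ← hftc]
  have hxr : (0:ℝ) ≤ x^(p+1+1) := Real.rpow_nonneg hx0.le _
  have hden : (0:ℝ) < (p+1)*(p+1+1) := by nlinarith
  have : 2*x^(p+1+1)/((p+1)*(p+1+1)) ≥ 0 := by positivity
  have hfin : (∫ t in (0:ℝ)..x, g t) ≤ 6 * x^p := by
    rw [hval] at hint
    nlinarith
  linarith


lemma F2_le {p x : ℝ} (hp1 : 1 < p) (hp2 : p < 2) (hx : 1 ≤ x) :
    x^p + 2/(p+1) - ((1+x)^(p+1) - (x-1)^(p+1))/(p+1)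
      + ((1+x)^(p+1+1) + (x-1)^(p+1+1) - 2*x^(p+1+1) - 2)/((p+1)*(p+1+1)) ≤ 2 := by
  have hx0 : (0:ℝ) < x := by linarith
  have hp0 : (0:ℝ) ≤ p := by linarith
  have hq0 : (0:ℝ) ≤ p + 1 := by linarith
  have hq0' : p + 1 ≠ 0 := by linarith
  have hr0' : p + 1 + 1 ≠ 0 := by linarith
  set Dint : ℝ → ℝ := fun t => ((t+x)^(p+1) - x*(t+x)^p)
    + ((-((x-t)^(p+1))) - x * (-((x-t)^p))) with hDdef
  have contD : Continuous Dint := by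
    have c1 : Continuous fun t:ℝ => (t+x)^(p+1) :=
      (continuous_id.add continuous_const).rpow_const (fun _ => Or.inr hq0)
    have c2 : Continuous fun t:ℝ => (t+x)^p :=
      (continuous_id.add continuous_const).rpow_const (fun _ => Or.inr hp0)
    have c3 : Continuous fun t:ℝ => (x-t)^(p+1) :=
      (continuous_const.sub continuous_id).rpow_const (fun _ => Or.inr hq0)
    have c4 : Continuous fun t:ℝ => (x-t)^p :=
      (continuous_const.sub continuous_id).rpow_const (fun _ => Or.inr hp0)
    exact (c1.sub (continuous_const.mul c2)).add
      (c3.neg.sub (continuous_const.mul c4.neg))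
  have hftc : (∫ t in (0:ℝ)..1, Dint t)
      = (((1+x)^(p+1+1)/(p+1+1) - x*((1+x)^(p+1)/(p+1)))
          + ((x-1)^(p+1+1)/(p+1+1) - x*((x-1)^(p+1)/(p+1))))
        - (((0+x)^(p+1+1)/(p+1+1) - x*((0+x)^(p+1)/(p+1)))
          + ((x-0)^(p+1+1)/(p+1+1) - x*((x-0)^(p+1)/(p+1)))) := by
    have hmain := integral_eq_sub_of_hasDerivAt (a := (0:ℝ)) (b := 1)
      (f := fun t => ((t+x)^(p+1+1)/(p+1+1) - x*((t+x)^(p+1)/(p+1)))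
        + ((x-t)^(p+1+1)/(p+1+1) - x*((x-t)^(p+1)/(p+1))))
      (f' := Dint)
      (fun t _ => by
        have A1 := (hda_addc hq0 x t).sub ((hda_addc hp0 x t).const_mul x)
        have A2 := (hda_csub hq0 x t).sub ((hda_csub hp0 x t).const_mul x)
        exact A1.add A2)
      (contD.intervalIntegrable 0 1)
    rw [hmain]
  -- pointwise lower bound  2 x^p t ≤ Dint t on [0,1]
  have hlow : ∀ t ∈ Icc (0:ℝ) 1, 2*x^p*t ≤ Dint t := by
    intro t ht
    have h1 : (0:ℝ) ≤ x - t := by linarith [ht.2]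
    have h2 : (0:ℝ) ≤ t + x := by linarith [ht.1]
    have hconv := (convexOn_rpow hp1.le).2 (mem_Ici.2 h1) (mem_Ici.2 h2)
      (by norm_num : (0:ℝ) ≤ 1/2) (by norm_num : (0:ℝ) ≤ 1/2) (by norm_num)
    simp only [smul_eq_mul] at hconv
    rw [show (1/2:ℝ) * (x-t) + (1/2:ℝ) * (t+x) = x by ring] at hconv
    have hsum : 2*x^p ≤ (t+x)^p + (x-t)^p := by linarith
    have e1 : (t+x)^(p+1) = (t+x)^p * (t+x) := rpow_succ' h2 hq0'
    have e2 : (x-t)^(p+1) = (x-t)^p * (x-t) := rpow_succ' h1 hq0'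
    rw [hDdef]
    simp only
    rw [e1, e2]
    calc 2*x^p*t = t*(2*x^p) := by ring
      _ ≤ t*((t+x)^p + (x-t)^p) := mul_le_mul_of_nonneg_left hsum ht.1
      _ = (t+x)^p * (t+x) - x*(t+x)^p + ((-((x-t)^p * (x-t))) - x * (-((x-t)^p))) := by ring
  have hmono : (∫ t in (0:ℝ)..1, 2*x^p*t) ≤ ∫ t in (0:ℝ)..1, Dint t := by
    apply integral_mono_on (by norm_num) _ (contD.intervalIntegrable 0 1) hlow
    exact (continuous_const.mul continuous_id).intervalIntegrable 0 1
  have hval : (∫ t in (0:ℝ)..1, 2*x^p*t) = x^p := by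
    have : (∫ t in (0:ℝ)..1, 2*x^p*t) = 2*x^p * ∫ t in (0:ℝ)..1, t := by
      rw [← intervalIntegral.integral_const_mul]
    rw [this, integral_id]
    norm_num
    ring
  have hD : x^p ≤ ∫ t in (0:ℝ)..1, Dint t := by rw [← hval]; exact hmono
  -- key algebraic identity
  have h1x : (0:ℝ) ≤ 1 + x := by linarith
  have hx1 : (0:ℝ) ≤ x - 1 := by linarith
  have hkey : x^p + 2/(p+1) - ((1+x)^(p+1) - (x-1)^(p+1))/(p+1)
      + ((1+x)^(p+1+1) + (x-1)^(p+1+1) - 2*x^(p+1+1) - 2)/((p+1)*(p+1+1))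
      = x^p + 2/(p+1) - 2/((p+1)*(p+1+1))
        - ((((1+x)^(p+1+1)/(p+1+1) - x*((1+x)^(p+1)/(p+1)))
          + ((x-1)^(p+1+1)/(p+1+1) - x*((x-1)^(p+1)/(p+1))))
        - (((0+x)^(p+1+1)/(p+1+1) - x*((0+x)^(p+1)/(p+1)))
          + ((x-0)^(p+1+1)/(p+1+1) - x*((x-0)^(p+1)/(p+1))))) := by
    norm_num
    rw [rpow_succ' h1x hr0', rpow_succ' hx1 hr0', rpow_succ' hx0.le hr0',
      rpow_succ' hx0.le hq0']
    field_simp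
    ring
  rw [hkey, ← hftc]
  have hb1 : 2/(p+1) ≤ 2 := by
    rw [div_le_iff₀ (by linarith : (0:ℝ) < p+1)]
    nlinarith
  have hb2 : (0:ℝ) ≤ 2/((p+1)*(p+1+1)) := by positivity
  linarith


theorem stmt14 (H β : ℝ) (hH : H ∈ Set.Ioo (1/2 : ℝ) 1) (hβ : β ∈ Set.Ioo (1 - H) H) :
    (∃ M : ℝ, ∀ v > (0:ℝ), Real.sqrt (Theta H v) / v ^ (1 - β) ≤ M) ∧
    IntegrableOn (fun y : ℝ => Real.sqrt (Theta H y) / y ^ (2 - β)) (Set.Ioi 0) := by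
  obtain ⟨hH1, hH2⟩ := hH
  obtain ⟨hb1, hb2⟩ := hβ
  have hp1 : (1:ℝ) < 2*H := by linarith
  have hp2 : 2*H < 2 := by linarith
  -- square root bounds
  have sqS : ∀ v : ℝ, 0 < v → v ≤ 1 → Real.sqrt (Theta H v) ≤ Real.sqrt 7 * v ^ H := by
    intro v h1 h2
    have h3 : Real.sqrt (Theta H v) ≤ Real.sqrt (7 * v^(2*H)) := by
      apply Real.sqrt_le_sqrt
      rw [theta_small hH1 hH2 h1 h2]
      exact F1_le hp1 hp2 h1 h2
    have h4 : Real.sqrt (7 * v^(2*H)) = Real.sqrt 7 * Real.sqrt (v^(2*H)) :=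
      Real.sqrt_mul (by norm_num) _
    have h5 : Real.sqrt (v^(2*H)) = v^H := by
      rw [show 2*H = H*2 by ring, Real.rpow_mul h1.le,
        show (2:ℝ) = ((2:ℕ):ℝ) by norm_num, Real.rpow_natCast,
        Real.sqrt_sq (Real.rpow_nonneg h1.le H)]
    rw [h4, h5] at h3
    exact h3
  have sqL : ∀ v : ℝ, 1 ≤ v → Real.sqrt (Theta H v) ≤ Real.sqrt 2 := by
    intro v hv
    have h3 : Real.sqrt (Theta H v) ≤ Real.sqrt 2 := by
      apply Real.sqrt_le_sqrt
      rw [theta_large hH1 hH2 hv]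
      exact F2_le hp1 hp2 hv
    exact h3
  constructor
  · refine ⟨Real.sqrt 7 + Real.sqrt 2, fun v hv => ?_⟩
    have hvb : (0:ℝ) < v^(1-β) := Real.rpow_pos_of_pos hv _
    have hs7 : (0:ℝ) ≤ Real.sqrt 7 := Real.sqrt_nonneg 7
    have hs2 : (0:ℝ) ≤ Real.sqrt 2 := Real.sqrt_nonneg 2
    rcases le_or_gt v 1 with h | h
    · have h6 : Real.sqrt (Theta H v) / v^(1-β) ≤ (Real.sqrt 7 * v^H)/v^(1-β) :=
        (div_le_div_iff_of_pos_right hvb).2 (sqS v hv h)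
      have h7 : (Real.sqrt 7 * v^H)/v^(1-β) = Real.sqrt 7 * v^(H-(1-β)) := by
        rw [Real.rpow_sub hv H (1-β)]; ring
      have h8 : v^(H-(1-β)) ≤ 1 := Real.rpow_le_one hv.le h (by linarith)
      have h9 : Real.sqrt 7 * v^(H-(1-β)) ≤ Real.sqrt 7 * 1 :=
        mul_le_mul_of_nonneg_left h8 hs7
      rw [h7] at h6
      linarith
    · have h6 : Real.sqrt (Theta H v) / v^(1-β) ≤ Real.sqrt 2 / v^(1-β) :=
        (div_le_div_iff_of_pos_right hvb).2 (sqL v h.le)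
      have h7 : Real.sqrt 2 / v^(1-β) ≤ Real.sqrt 2 / 1 :=
        div_le_div_of_nonneg_left hs2 one_pos (Real.one_le_rpow h.le (by linarith))
      rw [div_one] at h7
      linarith
  · rw [← Ioc_union_Ioi_eq_Ioi (zero_le_one : (0:ℝ) ≤ 1)]
    apply IntegrableOn.union
    · -- on Ioc 0 1
      set FF1 : ℝ → ℝ := fun y => Real.sqrt (y^(2*H) + 2/(2*H+1)
          - ((1+y)^(2*H+1) + (1-y)^(2*H+1))/(2*H+1)
          + ((1+y)^(2*H+1+1) + (1-y)^(2*H+1+1) - 2*y^(2*H+1+1) - 2)/((2*H+1)*(2*H+1+1)))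
          / y^(2-β) with hFF1
      have hcont : Continuous fun y : ℝ => y^(2*H) + 2/(2*H+1)
          - ((1+y)^(2*H+1) + (1-y)^(2*H+1))/(2*H+1)
          + ((1+y)^(2*H+1+1) + (1-y)^(2*H+1+1) - 2*y^(2*H+1+1) - 2)/((2*H+1)*(2*H+1+1)) := by
        have e0 : (0:ℝ) ≤ 2*H := by linarith
        have e1 : (0:ℝ) ≤ 2*H+1 := by linarith
        have e2 : (0:ℝ) ≤ 2*H+1+1 := by linarith
        have c1 : Continuous fun y:ℝ => y^(2*H) := continuous_id.rpow_const (fun _ => Or.inr e0)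
        have c2 : Continuous fun y:ℝ => (1+y)^(2*H+1) :=
          (continuous_const.add continuous_id).rpow_const (fun _ => Or.inr e1)
        have c3 : Continuous fun y:ℝ => (1-y)^(2*H+1) :=
          (continuous_const.sub continuous_id).rpow_const (fun _ => Or.inr e1)
        have c4 : Continuous fun y:ℝ => (1+y)^(2*H+1+1) :=
          (continuous_const.add continuous_id).rpow_const (fun _ => Or.inr e2)
        have c5 : Continuous fun y:ℝ => (1-y)^(2*H+1+1) :=
          (continuous_const.sub continuous_id).rpow_const (fun _ => Or.inr e2)
        have c6 : Continuous fun y:ℝ => y^(2*H+1+1) := continuous_id.rpow_const (fun _ => Or.inr e2)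
        exact ((c1.add continuous_const).sub ((c2.add c3).div_const _)).add
          ((((c4.add c5).sub (continuous_const.mul c6)).sub continuous_const).div_const _)
      have hmeas : Measurable FF1 := by
        apply Measurable.div
        · exact (Real.continuous_sqrt.comp hcont).measurable
        · exact (continuous_id.rpow_const (fun _ => Or.inr (by linarith : (0:ℝ) ≤ 2-β))).measurable
      have hint : IntegrableOn FF1 (Ioc 0 1) := by
        apply Integrable.mono' (g := fun y => Real.sqrt 7 * y^(H-(2-β)))
        · have h1 : IntervalIntegrable (fun y:ℝ => y^(H-(2-β))) volume 0 1 :=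
            intervalIntegrable_rpow' (by linarith)
          have h2 : IntegrableOn (fun y:ℝ => y^(H-(2-β))) (Ioc 0 1) :=
            (intervalIntegrable_iff_integrableOn_Ioc_of_le zero_le_one).1 h1
          exact h2.const_mul _
        · exact hmeas.aestronglyMeasurable
        · rw [ae_restrict_iff' measurableSet_Ioc]
          apply Filter.Eventually.of_forall
          intro y hy
          have hy0 : (0:ℝ) < y := hy.1
          have hyb : (0:ℝ) < y^(2-β) := Real.rpow_pos_of_pos hy0 _
          have hnn : 0 ≤ FF1 y := div_nonneg (Real.sqrt_nonneg _) hyb.le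
          rw [Real.norm_eq_abs, abs_of_nonneg hnn, hFF1]
          have hb : Real.sqrt (y^(2*H) + 2/(2*H+1)
              - ((1+y)^(2*H+1) + (1-y)^(2*H+1))/(2*H+1)
              + ((1+y)^(2*H+1+1) + (1-y)^(2*H+1+1) - 2*y^(2*H+1+1) - 2)/((2*H+1)*(2*H+1+1)))
              ≤ Real.sqrt 7 * y^H := by
            have h3 := Real.sqrt_le_sqrt (F1_le hp1 hp2 hy0 hy.2)
            have h4 : Real.sqrt (7 * y^(2*H)) = Real.sqrt 7 * y^H := by
              rw [Real.sqrt_mul (by norm_num) _, show 2*H = H*2 by ring,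
                Real.rpow_mul hy0.le, show (2:ℝ) = ((2:ℕ):ℝ) by norm_num, Real.rpow_natCast,
                Real.sqrt_sq (Real.rpow_nonneg hy0.le H)]
            rw [h4] at h3
            exact h3
          calc Real.sqrt (y^(2*H) + 2/(2*H+1)
              - ((1+y)^(2*H+1) + (1-y)^(2*H+1))/(2*H+1)
              + ((1+y)^(2*H+1+1) + (1-y)^(2*H+1+1) - 2*y^(2*H+1+1) - 2)/((2*H+1)*(2*H+1+1)))
              / y^(2-β)
              ≤ (Real.sqrt 7 * y^H) / y^(2-β) := (div_le_div_iff_of_pos_right hyb).2 hb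
            _ = Real.sqrt 7 * y^(H-(2-β)) := by rw [Real.rpow_sub hy0 H (2-β)]; ring
      apply hint.congr_fun _ measurableSet_Ioc
      intro y hy
      rw [hFF1]
      simp only
      rw [← theta_small hH1 hH2 hy.1 hy.2]
    · -- on Ioi 1
      set FF2 : ℝ → ℝ := fun y => Real.sqrt (y^(2*H) + 2/(2*H+1)
          - ((1+y)^(2*H+1) - (y-1)^(2*H+1))/(2*H+1)
          + ((1+y)^(2*H+1+1) + (y-1)^(2*H+1+1) - 2*y^(2*H+1+1) - 2)/((2*H+1)*(2*H+1+1)))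
          / y^(2-β) with hFF2
      have hcont : Continuous fun y : ℝ => y^(2*H) + 2/(2*H+1)
          - ((1+y)^(2*H+1) - (y-1)^(2*H+1))/(2*H+1)
          + ((1+y)^(2*H+1+1) + (y-1)^(2*H+1+1) - 2*y^(2*H+1+1) - 2)/((2*H+1)*(2*H+1+1)) := by
        have e0 : (0:ℝ) ≤ 2*H := by linarith
        have e1 : (0:ℝ) ≤ 2*H+1 := by linarith
        have e2 : (0:ℝ) ≤ 2*H+1+1 := by linarith
        have c1 : Continuous fun y:ℝ => y^(2*H) := continuous_id.rpow_const (fun _ => Or.inr e0)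
        have c2 : Continuous fun y:ℝ => (1+y)^(2*H+1) :=
          (continuous_const.add continuous_id).rpow_const (fun _ => Or.inr e1)
        have c3 : Continuous fun y:ℝ => (y-1)^(2*H+1) :=
          (continuous_id.sub continuous_const).rpow_const (fun _ => Or.inr e1)
        have c4 : Continuous fun y:ℝ => (1+y)^(2*H+1+1) :=
          (continuous_const.add continuous_id).rpow_const (fun _ => Or.inr e2)
        have c5 : Continuous fun y:ℝ => (y-1)^(2*H+1+1) :=
          (continuous_id.sub continuous_const).rpow_const (fun _ => Or.inr e2)
        have c6 : Continuous fun y:ℝ => y^(2*H+1+1) := continuous_id.rpow_const (fun _ => Or.inr e2)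
        exact ((c1.add continuous_const).sub ((c2.sub c3).div_const _)).add
          ((((c4.add c5).sub (continuous_const.mul c6)).sub continuous_const).div_const _)
      have hmeas : Measurable FF2 := by
        apply Measurable.div
        · exact (Real.continuous_sqrt.comp hcont).measurable
        · exact (continuous_id.rpow_const (fun _ => Or.inr (by linarith : (0:ℝ) ≤ 2-β))).measurable
      have hint : IntegrableOn FF2 (Ioi 1) := by
        apply Integrable.mono' (g := fun y => Real.sqrt 2 * y^(β-2))
        · exact (integrableOn_Ioi_rpow_of_lt (by linarith) one_pos).const_mul _
        · exact hmeas.aestronglyMeasurable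
        · rw [ae_restrict_iff' measurableSet_Ioi]
          apply Filter.Eventually.of_forall
          intro y hy
          have hy1 : (1:ℝ) ≤ y := le_of_lt hy
          have hy0 : (0:ℝ) < y := by linarith
          have hyb : (0:ℝ) < y^(2-β) := Real.rpow_pos_of_pos hy0 _
          have hnn : 0 ≤ FF2 y := div_nonneg (Real.sqrt_nonneg _) hyb.le
          rw [Real.norm_eq_abs, abs_of_nonneg hnn, hFF2]
          have hb := Real.sqrt_le_sqrt (F2_le hp1 hp2 hy1)
          calc Real.sqrt (y^(2*H) + 2/(2*H+1)
              - ((1+y)^(2*H+1) - (y-1)^(2*H+1))/(2*H+1)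
              + ((1+y)^(2*H+1+1) + (y-1)^(2*H+1+1) - 2*y^(2*H+1+1) - 2)/((2*H+1)*(2*H+1+1)))
              / y^(2-β)
              ≤ Real.sqrt 2 / y^(2-β) := (div_le_div_iff_of_pos_right hyb).2 hb
            _ = Real.sqrt 2 * y^(β-2) := by
                rw [show β-2 = -(2-β) by ring, Real.rpow_neg hy0.le, div_eq_mul_inv]
      apply hint.congr_fun _ measurableSet_Ioi
      intro y hy
      rw [hFF2]
      simp only
      rw [← theta_large hH1 hH2 (le_of_lt hy)]
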